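/- Let μ, ν be absolutely continuous probability measures on ℝⁿ with finite second moments and finite entropy, and let ε_k → 0⁺. Define F_k(γ) = ∫|x−y|²dγ + ε_k H₂(γ) for γ ∈ Π(μ,ν) and +∞ otherwise, and F(γ) = ∫|x−y|²dγ for γ ∈ Π(μ,ν) and +∞ otherwise. Then for any γ and any sequence γ_k → γ narrowly, F(γ) ≤ liminf_{k→∞} F_k(γ_k). -/

import Mathlib

open MeasureTheory ENNReal Filter Topology
noncomputable section

abbrev En (n : ℕ) : Type := EuclideanSpace ℝ (Fin n)

def IsCoupling {n : ℕ} (μ ν : Measure (En n)) (γ : Measure (En n × En n)) : Prop :=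
  γ.map Prod.fst = μ ∧ γ.map Prod.snd = ν

def tCost {n : ℕ} (γ : Measure (En n × En n)) : ℝ≥0∞ :=
  ∫⁻ p, (‖p.1 - p.2‖₊ : ℝ≥0∞) ^ 2 ∂γ

def W2sq {n : ℕ} (μ ν : Measure (En n)) : ℝ≥0∞ :=
  ⨅ (γ : Measure (En n × En n)) (_ : IsCoupling μ ν γ), tCost γ

def M2 {n : ℕ} (μ : Measure (En n)) : ℝ≥0∞ := ∫⁻ x, (‖x‖₊ : ℝ≥0∞) ^ 2 ∂μ

def dens {X : Type*} [MeasureSpace X] (μ : Measure X) (x : X) : ℝ :=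
  (μ.rnDeriv volume x).toReal

def entIntegrand {X : Type*} [MeasureSpace X] (μ : Measure X) (x : X) : ℝ :=
  dens μ x * Real.log (dens μ x)

def Hneg {X : Type*} [MeasureSpace X] (μ : Measure X) : ℝ≥0∞ :=
  ∫⁻ x, ENNReal.ofReal (-(entIntegrand μ x))

def Hpos {X : Type*} [MeasureSpace X] (μ : Measure X) : ℝ≥0∞ :=
  ∫⁻ x, ENNReal.ofReal (entIntegrand μ x)

open scoped Classical in
def entE {X : Type*} [MeasureSpace X] (μ : Measure X) : EReal :=
  if μ ≪ (volume : Measure X) then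
    (if Hpos μ = ∞ then (⊤ : EReal) else ((Hpos μ).toReal : EReal) - ((Hneg μ : ℝ≥0∞) : EReal))
  else ⊤

def W2epsE {n : ℕ} (ε : ℝ) (μ ν : Measure (En n)) : EReal :=
  ⨅ (γ : Measure (En n × En n)) (_ : IsCoupling μ ν γ),
    ((tCost γ : ℝ≥0∞) : EReal) + (ε : EReal) * entE γ

def cube {n : ℕ} (j : Fin n → ℤ) (ℓ : ℝ) : Set (En n) :=
  {x | ∀ i, (j i : ℝ) * ℓ ≤ x i ∧ x i < ((j i : ℝ) + 1) * ℓ}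

def cellNormalize {n : ℕ} (μ : Measure (En n)) (S : Set (En n)) : Measure (En n) :=
  (μ S)⁻¹ • μ.restrict S

def blockApprox {n : ℕ} (μ ν : Measure (En n)) (γ : Measure (En n × En n)) (ℓ : ℝ) :
    Measure (En n × En n) :=
  Measure.sum (fun jk : (Fin n → ℤ) × (Fin n → ℤ) =>
    γ (cube jk.1 ℓ ×ˢ cube jk.2 ℓ) •
      ((cellNormalize μ (cube jk.1 ℓ)).prod (cellNormalize ν (cube jk.2 ℓ))))

open scoped Classical in
/-- The entropy-regularized transport functional `F_ε` on `𝒫(ℝⁿ×ℝⁿ)` (`+∞` off `Π(μ,ν)`). -/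
def gammaFk {n : ℕ} (μ ν : Measure (En n)) (ε : ℝ) (γ : Measure (En n × En n)) : EReal :=
  if IsCoupling μ ν γ then ((tCost γ : ℝ≥0∞) : EReal) + (ε : EReal) * entE γ else ⊤

open scoped Classical in
/-- The unregularized transport functional `F` on `𝒫(ℝⁿ×ℝⁿ)` (`+∞` off `Π(μ,ν)`). -/
def gammaF {n : ℕ} (μ ν : Measure (En n)) (γ : Measure (En n × En n)) : EReal :=
  if IsCoupling μ ν γ then ((tCost γ : ℝ≥0∞) : EReal) else ⊤

lemma aux_gauss (n : ℕ) : Integrable (fun x : En n => Real.exp (-(‖x‖^2))) := by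
  have h := (GaussianFourier.integrable_cexp_neg_mul_sq_norm_add
    (b := (1:ℂ)) (V := En n) (by norm_num) 0 0).norm
  convert h using 2 with v
  rw [Complex.norm_exp]
  norm_num [← Complex.ofReal_pow]

lemma aux_young (t q : ℝ) (ht : 0 ≤ t) : -(t * Real.log t) ≤ t * q + Real.exp (-q - 1) := by
  rcases ht.eq_or_lt with h | h
  · simp only [← h, zero_mul, neg_zero, zero_add]
    exact (Real.exp_pos _).le
  · have key : Real.exp (-q - 1) ≥ t * (-q - Real.log t) := by
      have h1 : (-q - 1 - Real.log t) + 1 ≤ Real.exp (-q - 1 - Real.log t) :=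
        Real.add_one_le_exp _
      have h2 : Real.exp (-q - 1 - Real.log t) = Real.exp (-q - 1) / t := by
        rw [Real.exp_sub, Real.exp_log h]
      rw [h2] at h1
      have := mul_le_mul_of_nonneg_left h1 h.le
      calc t * (-q - Real.log t) = t * ((-q - 1 - Real.log t) + 1) := by ring
        _ ≤ t * (Real.exp (-q - 1) / t) := this
        _ = Real.exp (-q - 1) := by field_simp
    nlinarith [key]

def Cn (n : ℕ) : ℝ≥0∞ :=
  ∫⁻ z : En n × En n, ENNReal.ofReal (Real.exp (-(‖z.1‖^2 + ‖z.2‖^2) - 1))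

lemma aux_Cn_ne_top (n : ℕ) : Cn n ≠ ∞ := by
  have hint : Integrable (fun z : En n × En n =>
      Real.exp (-1) * (Real.exp (-(‖z.1‖^2)) * Real.exp (-(‖z.2‖^2)))) := by
    rw [Measure.volume_eq_prod]
    exact (((aux_gauss n).mul_prod (aux_gauss n)).const_mul _)
  have heq : ∀ z : En n × En n, Real.exp (-(‖z.1‖^2 + ‖z.2‖^2) - 1)
      = Real.exp (-1) * (Real.exp (-(‖z.1‖^2)) * Real.exp (-(‖z.2‖^2))) := by
    intro z
    rw [← Real.exp_add, ← Real.exp_add]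
    ring_nf
  have hfin := hint.hasFiniteIntegral
  rw [HasFiniteIntegral] at hfin
  refine ne_of_lt (lt_of_le_of_lt (lintegral_mono fun z => ?_) hfin)
  rw [heq z]
  rw [← Real.enorm_eq_ofReal (by positivity)]
lemma aux_Hneg_le {n : ℕ} (μ ν : Measure (En n)) (γ' : Measure (En n × En n))
    (hc : IsCoupling μ ν γ') : Hneg γ' ≤ M2 μ + M2 ν + Cn n := by
  have hqcont : Continuous (fun z : En n × En n => ‖z.1‖^2 + ‖z.2‖^2) := by
    exact (continuous_fst.norm.pow 2).add (continuous_snd.norm.pow 2)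
  have hqmeas : Measurable (fun z : En n × En n => ENNReal.ofReal (‖z.1‖^2 + ‖z.2‖^2)) :=
    ENNReal.measurable_ofReal.comp hqcont.measurable
  have hrn : Measurable (γ'.rnDeriv (volume : Measure (En n × En n))) :=
    Measure.measurable_rnDeriv _ _
  -- pointwise bound
  have step1 : Hneg γ' ≤
      (∫⁻ z, (γ'.rnDeriv volume z) * ENNReal.ofReal (‖z.1‖^2 + ‖z.2‖^2)) + Cn n := by
    have : Hneg γ' ≤ ∫⁻ z, ((γ'.rnDeriv volume z) * ENNReal.ofReal (‖z.1‖^2 + ‖z.2‖^2)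
        + ENNReal.ofReal (Real.exp (-(‖z.1‖^2 + ‖z.2‖^2) - 1))) := by
      apply lintegral_mono
      intro z
      have hq : (0:ℝ) ≤ ‖z.1‖^2 + ‖z.2‖^2 := by positivity
      have ht : (0:ℝ) ≤ dens γ' z := ENNReal.toReal_nonneg
      have hy := aux_young (dens γ' z) (‖z.1‖^2 + ‖z.2‖^2) ht
      calc ENNReal.ofReal (-(entIntegrand γ' z))
          ≤ ENNReal.ofReal (dens γ' z * (‖z.1‖^2 + ‖z.2‖^2)
              + Real.exp (-(‖z.1‖^2 + ‖z.2‖^2) - 1)) := ENNReal.ofReal_le_ofReal hy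
        _ = ENNReal.ofReal (dens γ' z * (‖z.1‖^2 + ‖z.2‖^2))
              + ENNReal.ofReal (Real.exp (-(‖z.1‖^2 + ‖z.2‖^2) - 1)) :=
            ENNReal.ofReal_add (by positivity) (Real.exp_pos _).le
        _ ≤ (γ'.rnDeriv volume z) * ENNReal.ofReal (‖z.1‖^2 + ‖z.2‖^2)
              + ENNReal.ofReal (Real.exp (-(‖z.1‖^2 + ‖z.2‖^2) - 1)) := by
            gcongr
            rw [ENNReal.ofReal_mul ht]
            exact mul_le_mul_left ENNReal.ofReal_toReal_le _
    refine this.trans (le_of_eq ?_)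
    have hgm : Measurable (fun z : En n × En n =>
        ENNReal.ofReal (Real.exp (-(‖z.1‖^2 + ‖z.2‖^2) - 1))) :=
      ENNReal.measurable_ofReal.comp
        ((Real.continuous_exp.comp (hqcont.neg.sub continuous_const)).measurable)
    rw [lintegral_add_right _ hgm]
    rfl
  refine step1.trans ?_
  gcongr
  -- the moment term
  have step2 : (∫⁻ z, (γ'.rnDeriv volume z) * ENNReal.ofReal (‖z.1‖^2 + ‖z.2‖^2))
      ≤ ∫⁻ z, ENNReal.ofReal (‖z.1‖^2 + ‖z.2‖^2) ∂γ' := by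
    have h := lintegral_withDensity_eq_lintegral_mul (volume : Measure (En n × En n)) hrn hqmeas
    simp only [Pi.mul_apply] at h
    rw [← h]
    exact lintegral_mono' (Measure.withDensity_rnDeriv_le _ _) le_rfl
  refine step2.trans (le_of_eq ?_)
  have hkey : ∀ z : En n × En n, ENNReal.ofReal (‖z.1‖^2 + ‖z.2‖^2)
      = (‖z.1‖₊ : ℝ≥0∞)^2 + (‖z.2‖₊ : ℝ≥0∞)^2 := by
    intro z
    rw [ENNReal.ofReal_add (by positivity) (by positivity),
      ENNReal.ofReal_pow (norm_nonneg _), ENNReal.ofReal_pow (norm_nonneg _),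
      ofReal_norm, enorm_eq_nnnorm, ofReal_norm, enorm_eq_nnnorm]
  simp_rw [hkey]
  rw [lintegral_add_left (measurable_fst.nnnorm.coe_nnreal_ennreal.pow_const 2)]
  have h1 : (∫⁻ z : En n × En n, (‖z.1‖₊ : ℝ≥0∞)^2 ∂γ') = M2 μ := by
    rw [M2, ← hc.1, lintegral_map (measurable_nnnorm.coe_nnreal_ennreal.pow_const 2)
      measurable_fst]
  have h2 : (∫⁻ z : En n × En n, (‖z.2‖₊ : ℝ≥0∞)^2 ∂γ') = M2 ν := by
    rw [M2, ← hc.2, lintegral_map (measurable_nnnorm.coe_nnreal_ennreal.pow_const 2)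
      measurable_snd]
  rw [h1, h2]
lemma aux_coe_ennreal_toReal {x : ℝ≥0∞} (hx : x ≠ ∞) :
    (x : EReal) = ((x.toReal : ℝ) : EReal) := by
  conv_lhs => rw [← ENNReal.ofReal_toReal hx]
  rw [EReal.coe_ennreal_ofReal, max_eq_left ENNReal.toReal_nonneg]

lemma aux_entE_ge {n : ℕ} (μ ν : Measure (En n)) (γ' : Measure (En n × En n))
    (hc : IsCoupling μ ν γ') (hB : M2 μ + M2 ν + Cn n ≠ ∞) :
    ((-(M2 μ + M2 ν + Cn n).toReal : ℝ) : EReal) ≤ entE γ' := by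
  set B := M2 μ + M2 ν + Cn n with hBdef
  have hHneg : Hneg γ' ≤ B := aux_Hneg_le μ ν γ' hc
  have hHne : Hneg γ' ≠ ∞ := ne_top_of_le_ne_top hB hHneg
  rw [entE]
  split_ifs with h1 h2
  · exact le_top
  · rw [aux_coe_ennreal_toReal hHne, ← EReal.coe_sub, EReal.coe_le_coe_iff]
    have h3 : (Hneg γ').toReal ≤ B.toReal := ENNReal.toReal_mono hB hHneg
    have h4 : 0 ≤ (Hpos γ').toReal := ENNReal.toReal_nonneg
    linarith
  · exact le_top
lemma aux_ext {n : ℕ} (ρ σ : Measure (En n)) [IsFiniteMeasure ρ] [IsFiniteMeasure σ]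
    (h : ∀ f : BoundedContinuousFunction (En n) ℝ, ∫ x, f x ∂ρ = ∫ x, f x ∂σ) : ρ = σ := by
  apply MeasureTheory.ext_of_forall_lintegral_eq_of_IsFiniteMeasure
  intro f
  have lip : LipschitzWith 1 ((↑) : NNReal → ℝ) := isometry_subtype_coe.lipschitz
  have hf := h (BoundedContinuousFunction.comp _ lip f)
  have h1 := BoundedContinuousFunction.toReal_lintegral_coe_eq_integral f ρ
  have h2 := BoundedContinuousFunction.toReal_lintegral_coe_eq_integral f σ
  have e1 : (∫ x, ((f x : ℝ)) ∂ρ) = ∫ x, (BoundedContinuousFunction.comp _ lip f) x ∂ρ := rfl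
  have e2 : (∫ x, ((f x : ℝ)) ∂σ) = ∫ x, (BoundedContinuousFunction.comp _ lip f) x ∂σ := rfl
  rw [e1, hf, ← e2, ← h2] at h1
  exact (ENNReal.toReal_eq_toReal_iff'
    (f.lintegral_lt_top_of_nnreal ρ).ne (f.lintegral_lt_top_of_nnreal σ).ne).mp h1
def fmB (n : ℕ) (m : ℕ) : BoundedContinuousFunction (En n × En n) ℝ :=
  BoundedContinuousFunction.ofNormedAddCommGroup
    (fun p : En n × En n => min (‖p.1 - p.2‖^2) m)
    (((continuous_fst.sub continuous_snd).norm.pow 2).min continuous_const)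
    m
    (fun p => by
      rw [Real.norm_eq_abs, abs_of_nonneg (le_min (by positivity) (Nat.cast_nonneg m))]
      exact min_le_right _ _)

lemma fmB_apply {n : ℕ} (m : ℕ) (p : En n × En n) :
    fmB n m p = min (‖p.1 - p.2‖^2) m := rfl

lemma fmB_nonneg {n : ℕ} (m : ℕ) (p : En n × En n) : 0 ≤ fmB n m p := by
  rw [fmB_apply]
  exact le_min (by positivity) (Nat.cast_nonneg m)

lemma aux_pow_eq {n : ℕ} (p : En n × En n) :
    ENNReal.ofReal (‖p.1 - p.2‖^2) = (‖p.1 - p.2‖₊ : ℝ≥0∞)^2 := by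
  rw [ENNReal.ofReal_pow (norm_nonneg _), ofReal_norm, enorm_eq_nnnorm]

lemma aux_ofReal_fm_le {n : ℕ} (m : ℕ) (γ' : Measure (En n × En n)) [IsProbabilityMeasure γ'] :
    ENNReal.ofReal (∫ p, fmB n m p ∂γ') ≤ tCost γ' := by
  rw [MeasureTheory.ofReal_integral_eq_lintegral_ofReal ((fmB n m).integrable γ')
    (ae_of_all _ (fmB_nonneg m))]
  refine lintegral_mono fun p => ?_
  rw [fmB_apply, ← aux_pow_eq]
  exact ENNReal.ofReal_le_ofReal (min_le_left _ _)

/-- Γ-liminf: for `ε_k → 0⁺` and any sequence `γ_k → γ` narrowly,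
`F(γ) ≤ liminf_k F_k(γ_k)`. -/
theorem stmt_12 {n : ℕ} (μ ν : Measure (En n))
    [IsProbabilityMeasure μ] [IsProbabilityMeasure ν]
    (hμac : μ ≪ (volume : Measure (En n))) (hνac : ν ≪ (volume : Measure (En n)))
    (hμM : M2 μ ≠ ∞) (hνM : M2 ν ≠ ∞) (hμH : entE μ ≠ ⊤) (hνH : entE ν ≠ ⊤)
    (ε : ℕ → ℝ) (hε0 : ∀ k, 0 ≤ ε k) (hε : Tendsto ε atTop (𝓝 (0:ℝ)))
    (γ : Measure (En n × En n)) [IsProbabilityMeasure γ]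
    (γs : ℕ → Measure (En n × En n)) (hγsP : ∀ k, IsProbabilityMeasure (γs k))
    (hconv : ∀ f : BoundedContinuousFunction (En n × En n) ℝ,
      Tendsto (fun k => ∫ p, f p ∂(γs k)) atTop (𝓝 (∫ p, f p ∂γ))) :
    gammaF μ ν γ ≤ Filter.liminf (fun k => gammaFk μ ν (ε k) (γs k)) atTop := by
  by_cases hγ : IsCoupling μ ν γ
  · -- main case: γ is a coupling
    set L := Filter.liminf (fun k => gammaFk μ ν (ε k) (γs k)) atTop with hL
    have hB : M2 μ + M2 ν + Cn n ≠ ∞ :=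
      ENNReal.add_ne_top.mpr ⟨ENNReal.add_ne_top.mpr ⟨hμM, hνM⟩, aux_Cn_ne_top n⟩
    set b : ℝ := (M2 μ + M2 ν + Cn n).toReal with hb
    have hb0 : 0 ≤ b := ENNReal.toReal_nonneg
    have key : ∀ (m : ℕ) (δ : ℝ), 0 < δ →
        (((∫ p, fmB n m p ∂γ) - δ : ℝ) : EReal) ≤ L := by
      intro m δ hδ
      have hev : ∀ᶠ k in atTop, ε k * b < δ :=
        (hε.mul_const b).eventually_lt_const (by simpa using hδ)
      have hlow : ∀ᶠ k in atTop,
          (((∫ p, fmB n m p ∂(γs k)) - δ : ℝ) : EReal) ≤ gammaFk μ ν (ε k) (γs k) := by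
        filter_upwards [hev] with k hk
        rw [gammaFk]
        split_ifs with hck
        · haveI := hγsP k
          have h1 : (((∫ p, fmB n m p ∂(γs k)) : ℝ) : EReal) ≤ ((tCost (γs k) : ℝ≥0∞) : EReal) := by
            have := aux_ofReal_fm_le m (γs k)
            rw [← EReal.coe_ennreal_le_coe_ennreal_iff] at this
            refine le_trans (le_of_eq ?_) this
            rw [EReal.coe_ennreal_ofReal,
              max_eq_left (integral_nonneg (fmB_nonneg m))]
          have h2 : ((-δ : ℝ) : EReal) ≤ (ε k : EReal) * entE (γs k) := by
            have hent : ((-b : ℝ) : EReal) ≤ entE (γs k) := aux_entE_ge μ ν (γs k) hck hB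
            rcases (hε0 k).eq_or_lt with h0 | h0
            · rw [← h0]
              rw [show ((0:ℝ) : EReal) = (0 : EReal) from rfl, zero_mul]
              exact_mod_cast EReal.coe_le_coe_iff.mpr (by linarith : -δ ≤ (0:ℝ))
            · calc ((-δ : ℝ) : EReal) ≤ ((ε k * -b : ℝ) : EReal) := by
                    rw [EReal.coe_le_coe_iff]; nlinarith
                _ = (ε k : EReal) * ((-b : ℝ) : EReal) := EReal.coe_mul _ _
                _ ≤ (ε k : EReal) * entE (γs k) :=
                    mul_le_mul_of_nonneg_left hent (EReal.coe_nonneg.mpr (hε0 k))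
          calc (((∫ p, fmB n m p ∂(γs k)) - δ : ℝ) : EReal)
              = (((∫ p, fmB n m p ∂(γs k)) : ℝ) : EReal) + ((-δ : ℝ) : EReal) := by
                rw [EReal.coe_sub, EReal.coe_neg, sub_eq_add_neg]
            _ ≤ ((tCost (γs k) : ℝ≥0∞) : EReal) + (ε k : EReal) * entE (γs k) :=
                add_le_add h1 h2
        · exact le_top
      have hlim : Tendsto (fun k => (((∫ p, fmB n m p ∂(γs k)) - δ : ℝ) : EReal)) atTop
          (𝓝 (((∫ p, fmB n m p ∂γ) - δ : ℝ) : EReal)) :=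
        EReal.tendsto_coe.mpr ((hconv (fmB n m)).sub tendsto_const_nhds)
      have := Filter.liminf_le_liminf hlow
      rwa [hlim.liminf_eq] at this
    have keym : ∀ m : ℕ, (((∫ p, fmB n m p ∂γ) : ℝ) : EReal) ≤ L := by
      intro m
      have ht : Tendsto (fun j : ℕ => (((∫ p, fmB n m p ∂γ) - 1/(j+1) : ℝ) : EReal)) atTop
          (𝓝 (((∫ p, fmB n m p ∂γ) : ℝ) : EReal)) := by
        refine EReal.tendsto_coe.mpr ?_
        have := tendsto_one_div_add_atTop_nhds_zero_nat (𝕜 := ℝ)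
        simpa using tendsto_const_nhds.sub this
      exact le_of_tendsto' ht (fun j => key m (1/(j+1)) (by positivity))
    -- conclude via monotone convergence
    set T : ℕ → ℝ≥0∞ := fun m => ∫⁻ p, ENNReal.ofReal (fmB n m p) ∂γ with hT
    have hTle : ∀ m, (T m : EReal) ≤ L := by
      intro m
      have h0 : T m = ENNReal.ofReal (∫ p, fmB n m p ∂γ) :=
        (MeasureTheory.ofReal_integral_eq_lintegral_ofReal ((fmB n m).integrable γ)
          (ae_of_all _ (fmB_nonneg m))).symm
      rw [h0, EReal.coe_ennreal_ofReal, max_eq_left (integral_nonneg (fmB_nonneg m))]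
      exact keym m
    have hmono : Monotone T := by
      intro a c hac
      refine lintegral_mono fun p => ENNReal.ofReal_le_ofReal ?_
      rw [fmB_apply, fmB_apply]
      exact min_le_min le_rfl (by exact_mod_cast hac)
    have hsup : tCost γ = ⨆ m, T m := by
      have e1 : ∀ p : En n × En n,
          (‖p.1 - p.2‖₊ : ℝ≥0∞)^2 = ⨆ m : ℕ, ENNReal.ofReal (fmB n m p) := by
        intro p
        apply le_antisymm
        · have : ENNReal.ofReal (fmB n (⌈‖p.1 - p.2‖^2⌉₊) p) = (‖p.1 - p.2‖₊ : ℝ≥0∞)^2 := by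
            rw [fmB_apply, min_eq_left (Nat.le_ceil _), aux_pow_eq]
          rw [← this]
          exact le_iSup (fun m : ℕ => ENNReal.ofReal (fmB n m p)) _
        · refine iSup_le fun m => ?_
          rw [fmB_apply, ← aux_pow_eq]
          exact ENNReal.ofReal_le_ofReal (min_le_left _ _)
      calc tCost γ = ∫⁻ p, ⨆ m : ℕ, ENNReal.ofReal (fmB n m p) ∂γ := lintegral_congr e1
        _ = ⨆ m, T m := by
            refine lintegral_iSup (fun m => ?_) ?_
            · exact ENNReal.measurable_ofReal.comp (fmB n m).continuous.measurable
            · intro a c hac p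
              refine ENNReal.ofReal_le_ofReal ?_
              rw [fmB_apply, fmB_apply]
              exact min_le_min le_rfl (by exact_mod_cast hac)
    have htend : Tendsto (fun m => ((T m : ℝ≥0∞) : EReal)) atTop
        (𝓝 ((tCost γ : ℝ≥0∞) : EReal)) := by
      rw [hsup]
      exact (continuous_coe_ennreal_ereal.tendsto _).comp (tendsto_atTop_iSup hmono)
    have : ((tCost γ : ℝ≥0∞) : EReal) ≤ L := le_of_tendsto' htend hTle
    rw [gammaF, if_pos hγ]
    exact this
  · -- γ is not a coupling: eventually gammaFk = ⊤
    have hev : ∀ᶠ k in atTop, ¬ IsCoupling μ ν (γs k) := by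
      by_contra hcon
      rw [Filter.not_eventually] at hcon
      simp only [not_not] at hcon
      apply hγ
      haveI h1 : IsProbabilityMeasure (γ.map Prod.fst) :=
        Measure.isProbabilityMeasure_map measurable_fst.aemeasurable
      haveI h2 : IsProbabilityMeasure (γ.map Prod.snd) :=
        Measure.isProbabilityMeasure_map measurable_snd.aemeasurable
      constructor
      · apply aux_ext
        intro g
        have hG : ∀ (ρ : Measure (En n × En n)),
            ∫ x, g x ∂(ρ.map Prod.fst) = ∫ p, (g.compContinuous ⟨Prod.fst, continuous_fst⟩) p ∂ρ :=
          fun ρ => integral_map measurable_fst.aemeasurable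
            g.continuous.measurable.aestronglyMeasurable
        rw [hG γ]
        refine tendsto_nhds_unique_of_frequently_eq
          (hconv (g.compContinuous ⟨Prod.fst, continuous_fst⟩)) tendsto_const_nhds ?_
        refine hcon.mono fun k hk => ?_
        rw [← hG (γs k), hk.1]
      · apply aux_ext
        intro g
        have hG : ∀ (ρ : Measure (En n × En n)),
            ∫ x, g x ∂(ρ.map Prod.snd) = ∫ p, (g.compContinuous ⟨Prod.snd, continuous_snd⟩) p ∂ρ :=
          fun ρ => integral_map measurable_snd.aemeasurable
            g.continuous.measurable.aestronglyMeasurable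
        rw [hG γ]
        refine tendsto_nhds_unique_of_frequently_eq
          (hconv (g.compContinuous ⟨Prod.snd, continuous_snd⟩)) tendsto_const_nhds ?_
        refine hcon.mono fun k hk => ?_
        rw [← hG (γs k), hk.2]
    refine Filter.le_liminf_of_le (by isBoundedDefault) ?_
    filter_upwards [hev] with k hk
    rw [gammaFk, if_neg hk]
    exact le_top
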